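/- arXiv:1709.08177 — 3 statements merged into one kernel-verified Lean document; each statement's English description precedes it below -/
import Mathlib

section
/- Let D = D₁ ∪ D₂ be a union of two identical open balls in ℝ³ with disjoint closures that are symmetric with respect to the origin (D₂ = −D₁), and assume the map η ↦ S⁰_D[η] is injective on L²(∂D, σ). If η ∈ L²(∂D, σ) is such that S⁰_D[η] is equal to a constant c ∈ ℂ at every point of ∂D, then ∫_{∂D₁} η dσ = ∫_{∂D₂} η dσ. (This is the statement ∫_{∂D₁ − ∂D₂} (S⁰_D)⁻¹ S¹_D[φ] dσ = 0 of the paper, since S¹_D[φ] = −(i/4π) ∫_{∂D} φ dσ is a constant function on ∂D.) -/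
open MeasureTheory Metric Classical

noncomputable section

local notation "E3" => EuclideanSpace ℝ (Fin 3)

/-- The boundary `∂D = ∂D₁ ∪ ∂D₂` of the two-ball domain `D = D₁ ∪ D₂`. -/
def dimerBdry (c₁ c₂ : E3) (r₁ r₂ : ℝ) : Set E3 := sphere c₁ r₁ ∪ sphere c₂ r₂

/-- The surface measure `σ`: 2-dimensional Hausdorff measure restricted to `∂D`. -/
def dimerMeas (c₁ c₂ : E3) (r₁ r₂ : ℝ) : Measure E3 :=
  (μH[2] : Measure E3).restrict (dimerBdry c₁ c₂ r₁ r₂)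

/-- The quasi-static single layer potential
`S⁰_D[φ](x) = −(1/4π) ∫_{∂D} φ(y) |x−y|⁻¹ dσ(y)` (complex density). -/
def SL0 (c₁ c₂ : E3) (r₁ r₂ : ℝ) (φ : E3 → ℂ) (x : E3) : ℂ :=
  -(4 * (Real.pi : ℂ))⁻¹ * ∫ y in dimerBdry c₁ c₂ r₁ r₂, φ y * ((‖x - y‖⁻¹ : ℝ) : ℂ) ∂μH[2]

/-- The map `η ↦ S⁰_D[η]` is injective on `L²(∂D, σ)`. -/
def SL0Injective (c₁ c₂ : E3) (r₁ r₂ : ℝ) : Prop :=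
  ∀ η η' : E3 → ℂ, MemLp η 2 (dimerMeas c₁ c₂ r₁ r₂) →
    MemLp η' 2 (dimerMeas c₁ c₂ r₁ r₂) →
    (∀ᵐ x ∂(dimerMeas c₁ c₂ r₁ r₂), SL0 c₁ c₂ r₁ r₂ η x = SL0 c₁ c₂ r₁ r₂ η' x) →
    η =ᵐ[dimerMeas c₁ c₂ r₁ r₂] η'

/-- Negation preserves the 2-dimensional Hausdorff measure on `E3`. -/
lemma negMP : MeasurePreserving (fun x : E3 => -x) μH[2] μH[2] :=
  ((LinearIsometryEquiv.neg ℝ (E := E3)).toIsometryEquiv).measurePreserving_hausdorffMeasure 2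

lemma negEmb : MeasurableEmbedding (fun x : E3 => -x) :=
  (Homeomorph.neg E3).measurableEmbedding

lemma neg_preimage_sphere (c : E3) (r : ℝ) :
    (fun x : E3 => -x) ⁻¹' sphere c r = sphere (-c) r := by
  ext x
  simp only [Set.mem_preimage, mem_sphere]
  rw [show dist (-x) c = dist x (-c) by rw [← dist_neg_neg, neg_neg]]

/-- for a symmetric dimer (`D₂ = −D₁`), if `S⁰_D[η]` is constant on
`∂D`, then `∫_{∂D₁} η dσ = ∫_{∂D₂} η dσ`. -/
theorem constant_potential_balanced_charge
    (c : E3) (r : ℝ) (hr : 0 < r)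
    (hdisj : Disjoint (closedBall c r) (closedBall (-c) r))
    (hinj : SL0Injective c (-c) r r)
    (η : E3 → ℂ) (hη : MemLp η 2 (dimerMeas c (-c) r r))
    (a : ℂ) (hconst : ∀ x ∈ dimerBdry c (-c) r r, SL0 c (-c) r r η x = a) :
    ∫ y in sphere c r, η y ∂μH[2] = ∫ y in sphere (-c) r, η y ∂μH[2] := by
  set S := dimerBdry c (-c) r r with hSdef
  have hSneg : (fun x : E3 => -x) ⁻¹' S = S := by
    rw [hSdef]
    unfold dimerBdry
    rw [Set.preimage_union, neg_preimage_sphere, neg_preimage_sphere, neg_neg, Set.union_comm]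
  have hSmeas : MeasurableSet S :=
    (isClosed_sphere.union isClosed_sphere).measurableSet
  set η' : E3 → ℂ := fun x => η (-x) with hη'def
  -- the single layer potential of the reflected density is the reflection of the potential
  have hSL : ∀ x : E3, SL0 c (-c) r r η' x = SL0 c (-c) r r η (-x) := by
    intro x
    unfold SL0
    congr 1
    have key := negMP.setIntegral_preimage_emb negEmb
      (fun z => η z * ((‖(-x) - z‖⁻¹ : ℝ) : ℂ)) S
    rw [hSneg] at key
    rw [← hSdef, ← key]
    refine integral_congr_ae (Filter.Eventually.of_forall fun y => ?_)
    simp only [hη'def]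
    congr 2
    rw [neg_sub_neg, norm_sub_rev]
  -- negation preserves the surface measure
  have mpS : MeasurePreserving (fun x : E3 => -x)
      (dimerMeas c (-c) r r) (dimerMeas c (-c) r r) := by
    have h := negMP.restrict_preimage_emb negEmb S
    rw [hSneg] at h
    exact h
  have hη'mem : MemLp η' 2 (dimerMeas c (-c) r r) := hη.comp_measurePreserving mpS
  -- the two potentials agree a.e. on the boundary
  have hae : ∀ᵐ x ∂(dimerMeas c (-c) r r),
      SL0 c (-c) r r η x = SL0 c (-c) r r η' x := by
    rw [dimerMeas, ae_restrict_iff' hSmeas]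
    refine Filter.Eventually.of_forall fun x hx => ?_
    have hx' : -x ∈ S := Set.mem_preimage.mp (by rw [hSneg]; exact hx)
    rw [hconst x hx, hSL x, hconst (-x) hx']
  have heq : η =ᵐ[dimerMeas c (-c) r r] η' := hinj η η' hη hη'mem hae
  have h1 : η =ᵐ[(μH[2] : Measure E3).restrict (sphere c r)] η' :=
    ae_restrict_of_ae_restrict_of_subset Set.subset_union_left heq
  calc ∫ y in sphere c r, η y ∂μH[2]
      = ∫ y in sphere c r, η' y ∂μH[2] := integral_congr_ae h1
    _ = ∫ y in sphere (-c) r, η y ∂μH[2] := by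
        have key := negMP.setIntegral_preimage_emb negEmb η (sphere (-c) r)
        rw [neg_preimage_sphere, neg_neg] at key
        exact key
end
end

section
/- Let D = D₁ ∪ D₂ be a union of two identical open balls in ℝ³ with disjoint closures, symmetric with respect to the origin (D₂ = −D₁), both centered on the x₁-axis, and assume the map η ↦ S⁰_D[η] is injective on L²(∂D, σ). Let ψ₁, ψ₂ ∈ L²(∂D, σ) satisfy S⁰_D[ψ₁] = 1 on ∂D₁, S⁰_D[ψ₁] = 0 on ∂D₂, S⁰_D[ψ₂] = 0 on ∂D₁, S⁰_D[ψ₂] = 1 on ∂D₂. Then ∫_{∂D} y₂ (ψ₁(y) − ψ₂(y)) dσ(y) = 0 and ∫_{∂D} y₃ (ψ₁(y) − ψ₂(y)) dσ(y) = 0. -/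
open MeasureTheory Metric Classical

noncomputable section

local notation "E3" => EuclideanSpace ℝ (Fin 3)

namespace TDM

/-- Reflection negating the `i`-th coordinate. -/
def reflEquiv (i : Fin 3) : E3 ≃ᵢ E3 where
  toFun := fun x => WithLp.toLp 2 (fun j => if j = i then -x j else x j)
  invFun := fun x => WithLp.toLp 2 (fun j => if j = i then -x j else x j)
  left_inv := by intro x; ext j; by_cases h : j = i <;> simp [h]
  right_inv := by intro x; ext j; by_cases h : j = i <;> simp [h]
  isometry_toFun := by
    intro x y
    simp only [edist_dist]
    congr 1
    rw [EuclideanSpace.dist_eq, EuclideanSpace.dist_eq]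
    congr 1
    apply Finset.sum_congr rfl
    intro j _
    by_cases h : j = i <;> simp [h, dist_neg_neg]

lemma refl_apply (i : Fin 3) (x : E3) (j : Fin 3) :
    reflEquiv i x j = if j = i then -x j else x j := rfl

lemma refl_invol (i : Fin 3) (x : E3) : reflEquiv i (reflEquiv i x) = x :=
  (reflEquiv i).left_inv x

lemma refl_fixed (i : Fin 3) (c : E3) (hc : c i = 0) : reflEquiv i c = c := by
  ext j
  by_cases h : j = i
  · subst h; simp [refl_apply, hc]
  · simp [refl_apply, h]

section

variable {i : Fin 3} {c : E3} {r : ℝ} (hc : c i = 0)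

lemma refl_mem_sphere (hc : c i = 0) {x : E3} (hx : x ∈ sphere c r) :
    reflEquiv i x ∈ sphere c r := by
  rw [mem_sphere] at hx ⊢
  calc dist (reflEquiv i x) c = dist (reflEquiv i x) (reflEquiv i c) := by
        rw [refl_fixed i c hc]
    _ = dist x c := (reflEquiv i).isometry.dist_eq x c
    _ = r := hx

lemma refl_mem_sphere_neg (hc : c i = 0) {x : E3} (hx : x ∈ sphere (-c) r) :
    reflEquiv i x ∈ sphere (-c) r := by
  have hc' : (-c) i = 0 := by simp [hc]
  exact refl_mem_sphere hc' hx

lemma refl_preimage_bdry (hc : c i = 0) :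
    (reflEquiv i) ⁻¹' dimerBdry c (-c) r r = dimerBdry c (-c) r r := by
  ext x
  constructor
  · rintro (h | h)
    · exact Or.inl (by simpa [refl_invol] using refl_mem_sphere hc h)
    · exact Or.inr (by simpa [refl_invol] using refl_mem_sphere_neg hc h)
  · rintro (h | h)
    · exact Or.inl (refl_mem_sphere hc h)
    · exact Or.inr (refl_mem_sphere_neg hc h)

lemma bdry_measurable : MeasurableSet (dimerBdry c (-c) r r) :=
  ((isClosed_sphere).union (isClosed_sphere)).measurableSet

lemma refl_mp (i : Fin 3) : MeasurePreserving (reflEquiv i) (μH[2] : Measure E3) μH[2] := by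
  refine ⟨(reflEquiv i).continuous.measurable, ?_⟩
  ext s hs
  rw [Measure.map_apply (reflEquiv i).continuous.measurable hs,
    (reflEquiv i).hausdorffMeasure_preimage 2 s]

lemma refl_emb (i : Fin 3) : MeasurableEmbedding (reflEquiv i : E3 → E3) :=
  (reflEquiv i).toHomeomorph.toMeasurableEquiv.measurableEmbedding

lemma refl_mp_restrict (hc : c i = 0) :
    MeasurePreserving (reflEquiv i) (dimerMeas c (-c) r r) (dimerMeas c (-c) r r) := by
  have := (refl_mp i).restrict_preimage (μa := (μH[2] : Measure E3))
    (s := dimerBdry c (-c) r r) bdry_measurable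
  rwa [refl_preimage_bdry hc] at this

lemma SL0_comp (hc : c i = 0) (ψ : E3 → ℂ) (x : E3) :
    SL0 c (-c) r r (ψ ∘ reflEquiv i) x = SL0 c (-c) r r ψ (reflEquiv i x) := by
  unfold SL0
  congr 1
  have key : ∀ y : E3, ‖x - y‖ = ‖reflEquiv i x - reflEquiv i y‖ := by
    intro y
    have := (reflEquiv i).isometry.dist_eq x y
    simpa [dist_eq_norm] using this.symm
  calc ∫ y in dimerBdry c (-c) r r, (ψ ∘ reflEquiv i) y * ((‖x - y‖⁻¹ : ℝ) : ℂ) ∂μH[2]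
      = ∫ y in dimerBdry c (-c) r r,
          (fun z => ψ z * ((‖reflEquiv i x - z‖⁻¹ : ℝ) : ℂ)) (reflEquiv i y) ∂μH[2] := by
        apply setIntegral_congr_fun bdry_measurable
        intro y _
        simp only [Function.comp_apply]
        rw [key y]
    _ = ∫ y in (reflEquiv i) ⁻¹' (dimerBdry c (-c) r r),
          (fun z => ψ z * ((‖reflEquiv i x - z‖⁻¹ : ℝ) : ℂ)) (reflEquiv i y) ∂μH[2] := by
        rw [refl_preimage_bdry hc]
    _ = ∫ z in dimerBdry c (-c) r r, ψ z * ((‖reflEquiv i x - z‖⁻¹ : ℝ) : ℂ) ∂μH[2] := by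
        exact (refl_mp i).setIntegral_preimage_emb (refl_emb i)
          (fun z => ψ z * ((‖reflEquiv i x - z‖⁻¹ : ℝ) : ℂ)) (dimerBdry c (-c) r r)

lemma comp_ae (hc : c i = 0) (hinj : SL0Injective c (-c) r r) (ψ : E3 → ℂ)
    (hmem : MemLp ψ 2 (dimerMeas c (-c) r r)) (a b : ℂ)
    (ha : ∀ x ∈ sphere c r, SL0 c (-c) r r ψ x = a)
    (hb : ∀ x ∈ sphere (-c) r, SL0 c (-c) r r ψ x = b) :
    (ψ ∘ reflEquiv i) =ᵐ[dimerMeas c (-c) r r] ψ := by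
  have hmap : Measure.map (reflEquiv i) (dimerMeas c (-c) r r) = dimerMeas c (-c) r r :=
    (refl_mp_restrict hc).map_eq
  have hmem' : MemLp (ψ ∘ reflEquiv i) 2 (dimerMeas c (-c) r r) :=
    (refl_emb i).memLp_map_measure_iff.mp (by rw [hmap]; exact hmem)
  apply hinj _ _ hmem' hmem
  have hpt : ∀ x ∈ dimerBdry c (-c) r r,
      SL0 c (-c) r r (ψ ∘ reflEquiv i) x = SL0 c (-c) r r ψ x := by
    rintro x (hx | hx)
    · rw [SL0_comp hc, ha _ (refl_mem_sphere hc hx), ha _ hx]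
    · rw [SL0_comp hc, hb _ (refl_mem_sphere_neg hc hx), hb _ hx]
  have := ae_restrict_mem (μ := (μH[2] : Measure E3)) (bdry_measurable (c := c) (r := r))
  unfold dimerMeas
  filter_upwards [this] with x hx using hpt x hx

lemma integral_coord_zero (hc : c i = 0) (hinj : SL0Injective c (-c) r r)
    (ψ₁ ψ₂ : E3 → ℂ)
    (hψ₁ : MemLp ψ₁ 2 (dimerMeas c (-c) r r))
    (hψ₂ : MemLp ψ₂ 2 (dimerMeas c (-c) r r))
    (hψ₁1 : ∀ x ∈ sphere c r, SL0 c (-c) r r ψ₁ x = 1)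
    (hψ₁2 : ∀ x ∈ sphere (-c) r, SL0 c (-c) r r ψ₁ x = 0)
    (hψ₂1 : ∀ x ∈ sphere c r, SL0 c (-c) r r ψ₂ x = 0)
    (hψ₂2 : ∀ x ∈ sphere (-c) r, SL0 c (-c) r r ψ₂ x = 1) :
    ∫ y in dimerBdry c (-c) r r, ((y i : ℝ) : ℂ) * (ψ₁ y - ψ₂ y) ∂μH[2] = 0 := by
  have h1 := comp_ae hc hinj ψ₁ hψ₁ 1 0 hψ₁1 hψ₁2
  have h2 := comp_ae hc hinj ψ₂ hψ₂ 0 1 hψ₂1 hψ₂2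
  set I := ∫ y in dimerBdry c (-c) r r, ((y i : ℝ) : ℂ) * (ψ₁ y - ψ₂ y) ∂μH[2] with hI
  have step1 : I = ∫ y in dimerBdry c (-c) r r,
      ((reflEquiv i y i : ℝ) : ℂ) * (ψ₁ (reflEquiv i y) - ψ₂ (reflEquiv i y)) ∂μH[2] := by
    conv_lhs => rw [hI, ← (refl_mp i).setIntegral_preimage_emb (refl_emb i)
      (fun y => ((y i : ℝ) : ℂ) * (ψ₁ y - ψ₂ y)) (dimerBdry c (-c) r r),
      refl_preimage_bdry hc]
  have step2 : ∫ y in dimerBdry c (-c) r r,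
      ((reflEquiv i y i : ℝ) : ℂ) * (ψ₁ (reflEquiv i y) - ψ₂ (reflEquiv i y)) ∂μH[2] = -I := by
    have hcoord : ∀ y : E3, ((reflEquiv i y i : ℝ) : ℂ) = -((y i : ℝ) : ℂ) := by
      intro y; simp [refl_apply]
    calc ∫ y in dimerBdry c (-c) r r,
        ((reflEquiv i y i : ℝ) : ℂ) * (ψ₁ (reflEquiv i y) - ψ₂ (reflEquiv i y)) ∂μH[2]
        = ∫ y in dimerBdry c (-c) r r, -(((y i : ℝ) : ℂ) * (ψ₁ y - ψ₂ y)) ∂μH[2] := by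
          apply integral_congr_ae
          have h1' : (ψ₁ ∘ reflEquiv i) =ᵐ[(μH[2] : Measure E3).restrict (dimerBdry c (-c) r r)] ψ₁ := h1
          have h2' : (ψ₂ ∘ reflEquiv i) =ᵐ[(μH[2] : Measure E3).restrict (dimerBdry c (-c) r r)] ψ₂ := h2
          filter_upwards [h1', h2'] with y hy1 hy2
          simp only [Function.comp_apply] at hy1 hy2
          rw [hcoord y, hy1, hy2]; ring
      _ = -I := by rw [integral_neg, hI]
  have : I = -I := step1.trans step2
  linear_combination this / 2

end

end TDM

/-- for a symmetric dimer (`D₂ = −D₁`) centered on the `x₁`-axis,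
`∫_{∂D} y₂ (ψ₁ − ψ₂) dσ = 0` and `∫_{∂D} y₃ (ψ₁ − ψ₂) dσ = 0`. -/
theorem transverse_dipole_moments_vanish
    (c : E3) (r : ℝ) (hr : 0 < r)
    (haxis : ∀ i : Fin 3, i ≠ 0 → c i = 0)
    (hdisj : Disjoint (closedBall c r) (closedBall (-c) r))
    (hinj : SL0Injective c (-c) r r)
    (ψ₁ ψ₂ : E3 → ℂ)
    (hψ₁ : MemLp ψ₁ 2 (dimerMeas c (-c) r r))
    (hψ₂ : MemLp ψ₂ 2 (dimerMeas c (-c) r r))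
    (hψ₁1 : ∀ x ∈ sphere c r, SL0 c (-c) r r ψ₁ x = 1)
    (hψ₁2 : ∀ x ∈ sphere (-c) r, SL0 c (-c) r r ψ₁ x = 0)
    (hψ₂1 : ∀ x ∈ sphere c r, SL0 c (-c) r r ψ₂ x = 0)
    (hψ₂2 : ∀ x ∈ sphere (-c) r, SL0 c (-c) r r ψ₂ x = 1) :
    (∫ y in dimerBdry c (-c) r r, ((y 1 : ℝ) : ℂ) * (ψ₁ y - ψ₂ y) ∂μH[2] = 0) ∧
    (∫ y in dimerBdry c (-c) r r, ((y 2 : ℝ) : ℂ) * (ψ₁ y - ψ₂ y) ∂μH[2] = 0) := by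
  refine ⟨?_, ?_⟩
  · exact TDM.integral_coord_zero (haxis 1 (by decide)) hinj ψ₁ ψ₂ hψ₁ hψ₂ hψ₁1 hψ₁2 hψ₂1 hψ₂2
  · exact TDM.integral_coord_zero (haxis 2 (by decide)) hinj ψ₁ ψ₂ hψ₁ hψ₂ hψ₁1 hψ₁2 hψ₂1 hψ₂2
end
end

section
/- Let D = D₁ ∪ D₂ be a union of two identical open balls in ℝ³ with disjoint closures, symmetric with respect to the origin (D₂ = −D₁), and assume the map η ↦ S⁰_D[η] is injective on L²(∂D, σ). Let ψ₁, ψ₂ ∈ L²(∂D, σ) satisfy S⁰_D[ψ₁] = 1 on ∂D₁, S⁰_D[ψ₁] = 0 on ∂D₂, S⁰_D[ψ₂] = 0 on ∂D₁, S⁰_D[ψ₂] = 1 on ∂D₂. Then the vector-valued integral vanishes: ∫_{∂D} y (ψ₁(y) + ψ₂(y)) dσ(y) = 0 ∈ ℝ³, i.e., ∫_{∂D} y_i (ψ₁(y) + ψ₂(y)) dσ(y) = 0 for i = 1, 2, 3. -/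
open MeasureTheory Metric Classical

noncomputable section

local notation "E3" => EuclideanSpace ℝ (Fin 3)

/-- negation as an isometry equiv. -/
def negIso : E3 ≃ᵢ E3 := (LinearIsometryEquiv.neg ℝ (E := E3)).toIsometryEquiv

lemma negIso_apply (y : E3) : negIso y = -y := rfl

lemma bdry_neg (c : E3) (r : ℝ) :
    (fun y : E3 => -y) ⁻¹' dimerBdry c (-c) r r = dimerBdry c (-c) r r := by
  have h1 : (fun y : E3 => -y) ⁻¹' sphere c r = sphere (-c) r := by
    ext y
    simp only [Set.mem_preimage, mem_sphere_iff_norm, sub_neg_eq_add]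
    rw [show -y - c = -(y + c) by abel, norm_neg]
  have h2 : (fun y : E3 => -y) ⁻¹' sphere (-c) r = sphere c r := by
    ext y
    simp only [Set.mem_preimage, mem_sphere_iff_norm]
    rw [neg_sub_neg, norm_sub_rev]
  simp [dimerBdry, Set.preimage_union, h1, h2, Set.union_comm]

lemma bdry_measurable (c : E3) (r : ℝ) : MeasurableSet (dimerBdry c (-c) r r) :=
  ((isClosed_sphere).union isClosed_sphere).measurableSet

lemma negMP_s16 (c : E3) (r : ℝ) :
    MeasurePreserving (fun y : E3 => -y) (dimerMeas c (-c) r r) (dimerMeas c (-c) r r) := by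
  constructor
  · exact measurable_neg
  · have hmap : Measure.map (fun y : E3 => -y) (μH[2] : Measure E3) = μH[2] :=
      negIso.map_hausdorffMeasure 2
    calc Measure.map (fun y : E3 => -y) ((μH[2] : Measure E3).restrict (dimerBdry c (-c) r r))
        = Measure.map (fun y : E3 => -y)
            ((μH[2] : Measure E3).restrict ((fun y : E3 => -y) ⁻¹' dimerBdry c (-c) r r)) := by
          rw [bdry_neg]
      _ = (Measure.map (fun y : E3 => -y) (μH[2] : Measure E3)).restrict (dimerBdry c (-c) r r) :=
          (Measure.restrict_map measurable_neg (bdry_measurable c r)).symm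
      _ = (μH[2] : Measure E3).restrict (dimerBdry c (-c) r r) := by rw [hmap]

lemma SL0_neg (c : E3) (r : ℝ) (ψ : E3 → ℂ) (x : E3) :
    SL0 c (-c) r r (fun y => ψ (-y)) x = SL0 c (-c) r r ψ (-x) := by
  unfold SL0
  congr 1
  have := (negMP_s16 c r).integral_comp negIso.toHomeomorph.measurableEmbedding
    (fun y => ψ y * ((‖-x - y‖⁻¹ : ℝ) : ℂ))
  simp only [dimerMeas] at this
  rw [show (∫ y in dimerBdry c (-c) r r, (fun y => ψ (-y)) y * ((‖x - y‖⁻¹ : ℝ) : ℂ) ∂μH[2])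
      = ∫ y in dimerBdry c (-c) r r, ψ (-y) * ((‖-x - (-y)‖⁻¹ : ℝ) : ℂ) ∂μH[2] from ?_, this]
  apply integral_congr_ae
  filter_upwards with y
  have : ‖x - y‖ = ‖-x - -y‖ := by rw [show -x - -y = -(x - y) by abel, norm_neg]
  rw [this]

/-- for a symmetric dimer (`D₂ = −D₁`),
`∫_{∂D} y_i (ψ₁ + ψ₂) dσ = 0` for `i = 1, 2, 3`. -/
theorem monopole_first_moment_vanishes
    (c : E3) (r : ℝ) (hr : 0 < r)
    (hdisj : Disjoint (closedBall c r) (closedBall (-c) r))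
    (hinj : SL0Injective c (-c) r r)
    (ψ₁ ψ₂ : E3 → ℂ)
    (hψ₁ : MemLp ψ₁ 2 (dimerMeas c (-c) r r))
    (hψ₂ : MemLp ψ₂ 2 (dimerMeas c (-c) r r))
    (hψ₁1 : ∀ x ∈ sphere c r, SL0 c (-c) r r ψ₁ x = 1)
    (hψ₁2 : ∀ x ∈ sphere (-c) r, SL0 c (-c) r r ψ₁ x = 0)
    (hψ₂1 : ∀ x ∈ sphere c r, SL0 c (-c) r r ψ₂ x = 0)
    (hψ₂2 : ∀ x ∈ sphere (-c) r, SL0 c (-c) r r ψ₂ x = 1) :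
    ∀ i : Fin 3,
      ∫ y in dimerBdry c (-c) r r, ((y i : ℝ) : ℂ) * (ψ₁ y + ψ₂ y) ∂μH[2] = 0 := by
  intro i
  set σ := dimerMeas c (-c) r r with hσ
  -- ψ₂ agrees a.e. with y ↦ ψ₁ (-y)
  have hφmem : MemLp (fun y => ψ₁ (-y)) 2 σ := hψ₁.comp_measurePreserving (negMP_s16 c r)
  have hae : ψ₂ =ᵐ[σ] fun y => ψ₁ (-y) := by
    apply hinj ψ₂ _ hψ₂ hφmem
    have hmem : ∀ᵐ x ∂σ, x ∈ dimerBdry c (-c) r r :=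
      ae_restrict_mem (bdry_measurable c r)
    filter_upwards [hmem] with x hx
    rw [SL0_neg c r ψ₁ x]
    rcases hx with hx | hx
    · have hx' : -x ∈ sphere (-c) r := by
        simp only [mem_sphere_iff_norm] at hx ⊢
        rw [show -x - -c = -(x - c) by abel, norm_neg]; exact hx
      rw [hψ₂1 x hx, hψ₁2 _ hx']
    · have hx' : -x ∈ sphere c r := by
        simp only [mem_sphere_iff_norm] at hx ⊢
        rw [show -x - c = -(x - -c) by abel, norm_neg]; exact hx
      rw [hψ₂2 x hx, hψ₁1 _ hx']
  have hae' : (fun y : E3 => ψ₂ (-y)) =ᵐ[σ] ψ₁ := by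
    have := (negMP_s16 c r).quasiMeasurePreserving.ae_eq_comp hae
    filter_upwards [this] with y hy
    simpa using hy
  -- the integral is odd
  set I := ∫ y in dimerBdry c (-c) r r, ((y i : ℝ) : ℂ) * (ψ₁ y + ψ₂ y) ∂μH[2] with hI
  have hIσ : I = ∫ y, ((y i : ℝ) : ℂ) * (ψ₁ y + ψ₂ y) ∂σ := rfl
  have hcomp : (∫ y, (((-y : E3) i : ℝ) : ℂ) * (ψ₁ (-y) + ψ₂ (-y)) ∂σ) = I := by
    rw [hIσ]
    exact (negMP_s16 c r).integral_comp negIso.toHomeomorph.measurableEmbedding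
      (fun y => ((y i : ℝ) : ℂ) * (ψ₁ y + ψ₂ y))
  have hneg : (∫ y, (((-y : E3) i : ℝ) : ℂ) * (ψ₁ (-y) + ψ₂ (-y)) ∂σ) = -I := by
    have hcong : (fun y : E3 => (((-y : E3) i : ℝ) : ℂ) * (ψ₁ (-y) + ψ₂ (-y)))
        =ᵐ[σ] fun y => -(((y i : ℝ) : ℂ) * (ψ₁ y + ψ₂ y)) := by
      filter_upwards [hae, hae'] with y h1 h2
      have hni : ((-y : E3) i : ℝ) = -(y i) := rfl
      rw [hni, h2]
      rw [show ψ₁ (-y) = ψ₂ y from h1.symm]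
      push_cast
      ring
    rw [integral_congr_ae hcong, integral_neg, hIσ]
  have h : I = -I := hcomp.symm.trans hneg
  linear_combination h / 2
end
end
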